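/- (Equation (T1-final) of the paper.) With D⁺, E, B(τ), X̃, G̃, Q_{ij}(τ) as described, assume X̃ᵀX̃ and Q₀₁(τ) are invertible, and let μ₁, …, μₙ be the eigenvalues (with multiplicity) of the real symmetric positive semidefinite matrix A = EG̃E. Then Σ_{i=1}^{n} μᵢ/(τ + μᵢ) = τ⁻¹ [ tr(D⁺B(τ)) − tr((Q₀₁(τ))⁻¹Q₁₂(τ)) ]. -/

import Mathlib

open Matrix

private lemma diag_eq_one_of {n : ℕ} {f : Fin n → ℝ} (h : ∀ i, f i = 1) :
    Matrix.diagonal f = 1 := by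
  rw [show f = fun _ => (1 : ℝ) from funext h, Matrix.diagonal_one]

lemma spectral_trace_aux {n : ℕ} (τ : ℝ) (hτ : 0 < τ)
    (A : Matrix (Fin n) (Fin n) ℝ) (hA : A.PosSemidef) :
    ∑ i, (τ + hA.isHermitian.eigenvalues i)⁻¹
      = Matrix.trace ((τ • (1 : Matrix (Fin n) (Fin n) ℝ) + A)⁻¹) := by
  set μ := hA.isHermitian.eigenvalues with hμ
  set V : Matrix (Fin n) (Fin n) ℝ :=
    (hA.isHermitian.eigenvectorUnitary : Matrix (Fin n) (Fin n) ℝ) with hV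
  have hV1 : V * star V = 1 := (Matrix.mem_unitaryGroup_iff).mp hA.isHermitian.eigenvectorUnitary.2
  have hV2 : star V * V = 1 := (Matrix.mem_unitaryGroup_iff').mp hA.isHermitian.eigenvectorUnitary.2
  have hspec : A = V * diagonal μ * star V := by
    have := hA.isHermitian.spectral_theorem
    simpa using this
  have hne : ∀ i, τ + μ i ≠ 0 := fun i =>
    ne_of_gt (add_pos_of_pos_of_nonneg hτ (hA.eigenvalues_nonneg i))
  have hsum : τ • (1 : Matrix (Fin n) (Fin n) ℝ) + A
      = V * diagonal (fun i => τ + μ i) * star V := by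
    rw [hspec]
    have : diagonal (fun i => τ + μ i) = τ • 1 + diagonal μ := by
      rw [← diagonal_one, ← diagonal_smul, diagonal_add]
      congr 1
      funext i
      simp [Pi.smul_apply]
    rw [this, Matrix.mul_add, Matrix.add_mul]
    congr 1
    simp [Matrix.mul_smul, Matrix.smul_mul, hV1]
  have hinv : (τ • (1 : Matrix (Fin n) (Fin n) ℝ) + A)⁻¹
      = V * diagonal (fun i => (τ + μ i)⁻¹) * star V := by
    apply Matrix.inv_eq_right_inv
    rw [hsum]
    calc V * diagonal (fun i => τ + μ i) * star V * (V * diagonal (fun i => (τ + μ i)⁻¹) * star V)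
        = V * diagonal (fun i => τ + μ i) * (star V * V) * diagonal (fun i => (τ + μ i)⁻¹)
            * star V := by
          simp only [Matrix.mul_assoc]
      _ = V * (diagonal (fun i => τ + μ i) * diagonal (fun i => (τ + μ i)⁻¹)) * star V := by
          rw [hV2]; simp only [Matrix.mul_assoc, Matrix.one_mul]
      _ = 1 := by
          rw [diagonal_mul_diagonal]
          have : (fun i => (τ + μ i) * (τ + μ i)⁻¹) = fun _ => (1 : ℝ) := by
            funext i; exact mul_inv_cancel₀ (hne i)
          rw [this, diagonal_one, Matrix.mul_one, hV1]
  rw [hinv, Matrix.trace_mul_comm, ← Matrix.mul_assoc, hV2, Matrix.one_mul, Matrix.trace_diagonal]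

/-- Equation (T1-final) of the paper: With the Woodbury setup and
`A = EG̃E` real symmetric positive semidefinite with eigenvalues `μ₁, …, μₙ`,
`Σᵢ μᵢ/(τ + μᵢ) = τ⁻¹[tr(D⁺B(τ)) − tr((Q₀₁(τ))⁻¹Q₁₂(τ))]`. -/
theorem T1_final
    (n p : ℕ) (hp : p < n) (τ : ℝ) (hτ : 0 < τ)
    (d : Fin n → ℝ) (hd : ∀ i, 0 ≤ d i)
    (Dplus : Matrix (Fin n) (Fin n) ℝ) (hD : Dplus = Matrix.diagonal d)
    (E : Matrix (Fin n) (Fin n) ℝ) (hE : E = Matrix.diagonal (fun i => Real.sqrt (d i)))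
    (B : Matrix (Fin n) (Fin n) ℝ)
    (hB : B = ((1 : Matrix (Fin n) (Fin n) ℝ) + τ⁻¹ • Dplus)⁻¹)
    (Xt : Matrix (Fin n) (Fin p) ℝ) (hX : IsUnit (Xtᵀ * Xt).det)
    (Gt : Matrix (Fin n) (Fin n) ℝ)
    (hGt : Gt = (1 : Matrix (Fin n) (Fin n) ℝ) - Xt * (Xtᵀ * Xt)⁻¹ * Xtᵀ)
    (Q : ℕ → ℕ → Matrix (Fin p) (Fin p) ℝ)
    (hQ : ∀ i j, Q i j = Xtᵀ * Dplus ^ i * B ^ j * Xt)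
    (hQinv : IsUnit (Q 0 1).det)
    (A : Matrix (Fin n) (Fin n) ℝ) (hAdef : A = E * Gt * E)
    (hA : A.PosSemidef) :
    ∑ i : Fin n, hA.isHermitian.eigenvalues i / (τ + hA.isHermitian.eigenvalues i) =
      τ⁻¹ * ((Dplus * B).trace - ((Q 0 1)⁻¹ * Q 1 2).trace) := by
  have hτ' : τ ≠ 0 := ne_of_gt hτ
  have hfpos : ∀ i, 0 < 1 + τ⁻¹ * d i := fun i =>
    add_pos_of_pos_of_nonneg one_pos (mul_nonneg (le_of_lt (inv_pos.mpr hτ)) (hd i))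
  set b : Fin n → ℝ := fun i => (1 + τ⁻¹ * d i)⁻¹ with hbdef
  have hBd : B = diagonal b := by
    have hID : (1 : Matrix (Fin n) (Fin n) ℝ) + τ⁻¹ • Dplus
        = diagonal (fun i => 1 + τ⁻¹ * d i) := by
      rw [hD, ← diagonal_one, ← diagonal_smul, diagonal_add]
      congr 1
    rw [hB, hID]
    apply Matrix.inv_eq_right_inv
    rw [diagonal_mul_diagonal]
    exact diag_eq_one_of fun i => mul_inv_cancel₀ (ne_of_gt (hfpos i))
  -- key diagonal identities
  have hDB1 : B + τ⁻¹ • (Dplus * B) = 1 := by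
    rw [hBd, hD, diagonal_mul_diagonal, ← diagonal_smul, diagonal_add]
    apply diag_eq_one_of
    intro i
    simp only [Pi.smul_apply, smul_eq_mul]
    have h := ne_of_gt (hfpos i)
    have hexp : τ + d i = τ * (1 + τ⁻¹ * d i) := by
      rw [mul_add, mul_one, ← mul_assoc, mul_inv_cancel₀ hτ', one_mul]
    field_simp [hτ']
    simp only [hbdef]
    calc (1 + τ⁻¹ * d i)⁻¹ * (τ + d i)
        = (τ + d i) * (1 + τ⁻¹ * d i)⁻¹ := by ring
      _ = τ * ((1 + τ⁻¹ * d i) * (1 + τ⁻¹ * d i)⁻¹) := by rw [hexp, mul_assoc]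
      _ = τ := by rw [mul_inv_cancel₀ h, mul_one]
  have hEE : E * E = Dplus := by
    rw [hE, hD, diagonal_mul_diagonal]
    exact congrArg _ (funext fun i => Real.mul_self_sqrt (hd i))
  have hEBE : ∀ (m : ℕ) (N : Matrix (Fin n) (Fin m) ℝ), E * (B * (E * N)) = Dplus * (B * N) := by
    intro m N
    have h : E * B * E = Dplus * B := by
      rw [hE, hBd, hD]
      simp only [diagonal_mul_diagonal]
      refine congrArg _ (funext fun i => ?_)
      calc Real.sqrt (d i) * b i * Real.sqrt (d i)
          = Real.sqrt (d i) * Real.sqrt (d i) * b i := by ring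
        _ = d i * b i := by rw [Real.mul_self_sqrt (hd i)]
    calc E * (B * (E * N)) = (E * B * E) * N := by simp only [Matrix.mul_assoc]
      _ = Dplus * (B * N) := by rw [h, Matrix.mul_assoc]
  have hEBBE : ∀ (m : ℕ) (N : Matrix (Fin n) (Fin m) ℝ),
      E * (B * (B * (E * N))) = Dplus * (B * (B * N)) := by
    intro m N
    have h : E * B * B * E = Dplus * B * B := by
      rw [hE, hBd, hD]
      simp only [diagonal_mul_diagonal]
      refine congrArg _ (funext fun i => ?_)
      calc Real.sqrt (d i) * b i * b i * Real.sqrt (d i)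
          = Real.sqrt (d i) * Real.sqrt (d i) * b i * b i := by ring
        _ = d i * b i * b i := by rw [Real.mul_self_sqrt (hd i)]
    calc E * (B * (B * (E * N))) = (E * B * B * E) * N := by simp only [Matrix.mul_assoc]
      _ = Dplus * (B * (B * N)) := by rw [h]; simp only [Matrix.mul_assoc]
  -- abbreviations
  set M : Matrix (Fin p) (Fin p) ℝ := (Xtᵀ * Xt)⁻¹ with hM
  set Qi : Matrix (Fin p) (Fin p) ℝ := (Q 0 1)⁻¹ with hQi
  set Q11 : Matrix (Fin p) (Fin p) ℝ := Xtᵀ * (Dplus * (B * Xt)) with hQ11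
  set W : Matrix (Fin n) (Fin n) ℝ := E * (Xt * (M * (Xtᵀ * E))) with hW
  set Y : Matrix (Fin n) (Fin n) ℝ := E * (Xt * (Qi * (Xtᵀ * E))) with hY
  set Z : Matrix (Fin n) (Fin n) ℝ := E * (Xt * ((M * (Q11 * Qi)) * (Xtᵀ * E))) with hZ
  set C : Matrix (Fin n) (Fin n) ℝ := τ⁻¹ • B + (τ⁻¹ * τ⁻¹) • (B * (Y * B)) with hC
  have hQ01 : Q 0 1 = Xtᵀ * (B * Xt) := by
    rw [hQ 0 1]; simp [Matrix.mul_assoc]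
  have hAW : A = Dplus - W := by
    rw [hAdef, hGt, hW]
    rw [Matrix.mul_sub, Matrix.sub_mul, Matrix.mul_one, hEE]
    congr 1
    simp only [Matrix.mul_assoc]
  -- the bracket identity
  have hMX : M * (Xtᵀ * Xt) = 1 := Matrix.nonsing_inv_mul _ hX
  have hQQi : Q 0 1 * Qi = 1 := Matrix.mul_nonsing_inv _ hQinv
  have hkey4 : Q 0 1 + τ⁻¹ • Q11 = Xtᵀ * Xt := by
    calc Q 0 1 + τ⁻¹ • Q11 = Xtᵀ * ((B + τ⁻¹ • (Dplus * B)) * Xt) := by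
          rw [hQ01, hQ11]
          simp only [Matrix.add_mul, Matrix.smul_mul, Matrix.mul_add, Matrix.mul_smul,
            Matrix.mul_assoc]
      _ = Xtᵀ * Xt := by rw [hDB1, Matrix.one_mul]
  have hbrak : Qi - M - τ⁻¹ • (M * (Q11 * Qi)) = 0 := by
    have h1 : M + τ⁻¹ • (M * (Q11 * Qi)) = Qi := by
      calc M + τ⁻¹ • (M * (Q11 * Qi))
          = M * ((Q 0 1 + τ⁻¹ • Q11) * Qi) := by
            rw [Matrix.add_mul, Matrix.mul_add, Matrix.smul_mul, Matrix.mul_smul, hQQi,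
              Matrix.mul_one, Matrix.mul_assoc]
        _ = Qi := by rw [hkey4, ← Matrix.mul_assoc, hMX, Matrix.one_mul]
    rw [sub_sub, sub_eq_zero]
    exact h1.symm
  have hzero : Y - W - τ⁻¹ • Z = 0 := by
    have hexp : Y - W - τ⁻¹ • Z
        = E * (Xt * ((Qi - M - τ⁻¹ • (M * (Q11 * Qi))) * (Xtᵀ * E))) := by
      simp only [hY, hW, hZ, Matrix.sub_mul, Matrix.smul_mul, Matrix.mul_sub, Matrix.mul_smul]
    rw [hexp, hbrak]
    simp
  -- main Woodbury identity
  have hmain : (τ • (1 : Matrix (Fin n) (Fin n) ℝ) + A) * C = 1 := by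
    have hWBY : W * (B * (Y * B)) = Z * B := by
      rw [hW, hY, hZ, hQ11]
      simp only [Matrix.mul_assoc]
      rw [hEBE n (Xt * (Qi * (Xtᵀ * (E * B))))]
    have c1 : (τ • (1 : Matrix (Fin n) (Fin n) ℝ)) * C = B + τ⁻¹ • (B * (Y * B)) := by
      rw [Matrix.smul_mul, Matrix.one_mul, hC, smul_add, smul_smul, smul_smul,
        mul_inv_cancel₀ hτ', one_smul,
        show τ * (τ⁻¹ * τ⁻¹) = τ⁻¹ by rw [← mul_assoc, mul_inv_cancel₀ hτ', one_mul]]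
    have c2 : Dplus * C = τ⁻¹ • (Dplus * B) + (τ⁻¹ * τ⁻¹) • ((Dplus * B) * (Y * B)) := by
      rw [hC, Matrix.mul_add, Matrix.mul_smul, Matrix.mul_smul, ← Matrix.mul_assoc]
    have e1 : (τ • (1 : Matrix (Fin n) (Fin n) ℝ)) * C + Dplus * C = 1 + τ⁻¹ • (Y * B) := by
      rw [c1, c2]
      calc B + τ⁻¹ • (B * (Y * B)) + (τ⁻¹ • (Dplus * B) + (τ⁻¹ * τ⁻¹) • ((Dplus * B) * (Y * B)))
          = (B + τ⁻¹ • (Dplus * B)) + τ⁻¹ • ((B + τ⁻¹ • (Dplus * B)) * (Y * B)) := by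
            rw [Matrix.add_mul, Matrix.smul_mul, smul_add, smul_smul]
            abel
        _ = 1 + τ⁻¹ • (Y * B) := by rw [hDB1, Matrix.one_mul]
    have e2 : W * C = τ⁻¹ • (W * B) + (τ⁻¹ * τ⁻¹) • (Z * B) := by
      rw [hC, Matrix.mul_add, Matrix.mul_smul, Matrix.mul_smul, hWBY]
    calc (τ • (1 : Matrix (Fin n) (Fin n) ℝ) + A) * C
        = ((τ • (1 : Matrix (Fin n) (Fin n) ℝ)) * C + Dplus * C) - W * C := by
          rw [hAW, Matrix.add_mul, Matrix.sub_mul]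
          abel
      _ = (1 + τ⁻¹ • (Y * B)) - (τ⁻¹ • (W * B) + (τ⁻¹ * τ⁻¹) • (Z * B)) := by rw [e1, e2]
      _ = 1 + τ⁻¹ • ((Y - W - τ⁻¹ • Z) * B) := by
          rw [Matrix.sub_mul, Matrix.sub_mul, Matrix.smul_mul, smul_sub, smul_sub, smul_smul]
          abel
      _ = 1 := by rw [hzero, Matrix.zero_mul, smul_zero, add_zero]
  have hCinv : (τ • (1 : Matrix (Fin n) (Fin n) ℝ) + A)⁻¹ = C := Matrix.inv_eq_right_inv hmain
  -- trace of the correction term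
  have hT : (B * (Y * B)).trace = (Qi * Q 1 2).trace := by
    have hsplit : B * (Y * B) = (B * (E * Xt)) * (Qi * (Xtᵀ * (E * B))) := by
      rw [hY]; simp only [Matrix.mul_assoc]
    rw [hsplit, Matrix.trace_mul_comm]
    congr 1
    rw [hQ 1 2, pow_one, pow_two]
    simp only [Matrix.mul_assoc]
    rw [hEBBE p Xt]
  -- eigenvalue sum rewrite
  have hLHS : (∑ i : Fin n, hA.isHermitian.eigenvalues i / (τ + hA.isHermitian.eigenvalues i))
      = (n : ℝ) - τ * ∑ i, (τ + hA.isHermitian.eigenvalues i)⁻¹ := by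
    rw [Finset.mul_sum, eq_sub_iff_add_eq, ← Finset.sum_add_distrib]
    have hone : ∀ i ∈ Finset.univ, hA.isHermitian.eigenvalues i / (τ + hA.isHermitian.eigenvalues i)
        + τ * (τ + hA.isHermitian.eigenvalues i)⁻¹ = 1 := by
      intro i _
      have hne : τ + hA.isHermitian.eigenvalues i ≠ 0 :=
        ne_of_gt (add_pos_of_pos_of_nonneg hτ (hA.eigenvalues_nonneg i))
      field_simp
      ring
    rw [Finset.sum_congr rfl hone, Finset.sum_const, Finset.card_univ, Fintype.card_fin,
      nsmul_eq_mul, mul_one]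
  rw [hLHS, spectral_trace_aux τ hτ A hA, hCinv]
  -- trace computations
  have htB : B.trace = ∑ i, b i := by rw [hBd, trace_diagonal]
  have htDB : (Dplus * B).trace = ∑ i, d i * b i := by
    rw [hD, hBd, diagonal_mul_diagonal, trace_diagonal]
  have htC : C.trace = τ⁻¹ * (∑ i, b i) + (τ⁻¹ * τ⁻¹) * (Qi * Q 1 2).trace := by
    rw [hC, trace_add, trace_smul, trace_smul, hT, htB, smul_eq_mul, smul_eq_mul]
  have hsumn : (n : ℝ) = (∑ i, b i) + τ⁻¹ * ∑ i, d i * b i := by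
    rw [Finset.mul_sum, ← Finset.sum_add_distrib]
    have hone : ∀ i ∈ Finset.univ, b i + τ⁻¹ * (d i * b i) = 1 := by
      intro i _
      have h := ne_of_gt (hfpos i)
      have hexp : τ + d i = τ * (1 + τ⁻¹ * d i) := by
        rw [mul_add, mul_one, ← mul_assoc, mul_inv_cancel₀ hτ', one_mul]
      field_simp [hτ']
      simp only [hbdef]
      calc (1 + τ⁻¹ * d i)⁻¹ * (τ + d i)
          = (τ + d i) * (1 + τ⁻¹ * d i)⁻¹ := by ring
        _ = τ * ((1 + τ⁻¹ * d i) * (1 + τ⁻¹ * d i)⁻¹) := by rw [hexp, mul_assoc]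
        _ = τ := by rw [mul_inv_cancel₀ h, mul_one]
    rw [Finset.sum_congr rfl hone, Finset.sum_const, Finset.card_univ, Fintype.card_fin,
      nsmul_eq_mul, mul_one]
  rw [htC, htDB, hsumn]
  field_simp
  ring
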